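/- If two parse trees T_G and T_H are structurally isomorphic, then the graphs G and H generated by them are isomorphic. -/

import Mathlib

/-- A colored quotient graph: its vertices are labels (natural numbers),
it has an adjacency relation recording the join (`η`) operations, and a
coloring of labels recording the relabelling (`ρ`) operations. -/
structure CQGraph where
  verts : Finset ℕ
  adj : ℕ → ℕ → Prop
  color : ℕ → ℕ

/-- A parse tree (restricted to its `⊕`-skeleton): a leaf creates a vertex
with a label; a `⊕` node has a list of immediate significant descendants,
each together with the colored quotient graph of the `η`/`ρ` operations
on the path from the `⊕` node to that descendant. -/
inductive PTree (α : Type) where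
  | leaf (v : α) (l : ℕ)
  | node (cs : List (CQGraph × PTree α))

/-- `e` is an isomorphism of the colored quotient graphs `Q` and `Q'`. -/
def QIso (Q Q' : CQGraph) (e : ℕ ≃ ℕ) : Prop :=
  (∀ x, x ∈ Q.verts ↔ e x ∈ Q'.verts) ∧
  ∀ a b, a ∈ Q.verts → b ∈ Q.verts → (Q.adj a b ↔ Q'.adj (e a) (e b))

/-- `e/color = π` restricted to the colors of `Q`: the map induced by `e`
on colors agrees with the label map `π`. -/
def ColorCompat (Q Q' : CQGraph) (e π : ℕ ≃ ℕ) : Prop :=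
  ∀ v ∈ Q.verts, π (Q.color v) = Q'.color (e v)

/-- Structural isomorphism of parse trees via a label map `π`:
single nodes (with labels matched by `π`) are structurally isomorphic, and
two `⊕` nodes are structurally isomorphic via `π` if there is a bijection
`γ` between their immediate significant descendants and, for each `i`, an
isomorphism `e` of the corresponding colored quotient graphs with
`e/color = π|_{color(Q_i)}` such that the subtrees are structurally
isomorphic via `e`. -/
inductive SIso : {α β : Type} → PTree α → (ℕ ≃ ℕ) → PTree β → Prop where
  | leaf {α β : Type} (v : α) (w : β) (l : ℕ) (π : ℕ ≃ ℕ) :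
      SIso (PTree.leaf v l) π (PTree.leaf w (π l))
  | node {α β : Type} (π : ℕ ≃ ℕ) (cs : List (CQGraph × PTree α))
      (ds : List (CQGraph × PTree β)) (γ : Fin cs.length ≃ Fin ds.length)
      (es : Fin cs.length → ℕ ≃ ℕ)
      (h1 : ∀ i : Fin cs.length, QIso (cs.get i).1 (ds.get (γ i)).1 (es i))
      (h2 : ∀ i : Fin cs.length,
        ColorCompat (cs.get i).1 (ds.get (γ i)).1 (es i) π)
      (h3 : ∀ i : Fin cs.length,
        SIso (cs.get i).2 (es i) (ds.get (γ i)).2) :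
      SIso (PTree.node cs) π (PTree.node ds)

/-- `x` is a vertex of the graph generated by the parse tree. -/
inductive VMem {α : Type} (x : α) : PTree α → Prop where
  | leaf (l : ℕ) : VMem x (PTree.leaf x l)
  | node (cs : List (CQGraph × PTree α)) (p : CQGraph × PTree α)
      (hp : p ∈ cs) : VMem x p.2 → VMem x (PTree.node cs)

/-- The vertex `x` has label `m` in the labeled graph generated by the
parse tree (labels are updated by the colorings of the quotient graphs). -/
inductive LabIs {α : Type} : PTree α → α → ℕ → Prop where
  | leaf (v : α) (l : ℕ) : LabIs (PTree.leaf v l) v l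
  | node (cs : List (CQGraph × PTree α)) (p : CQGraph × PTree α)
      (hp : p ∈ cs) (x : α) (m : ℕ) :
      LabIs p.2 x m → LabIs (PTree.node cs) x (p.1.color m)

/-- Adjacency in the graph generated by the parse tree: edges are either
inherited from a subtree, or created by the join operations recorded in
the colored quotient graphs. -/
inductive PAdj {α : Type} : PTree α → α → α → Prop where
  | inherit (cs : List (CQGraph × PTree α)) (p : CQGraph × PTree α)
      (hp : p ∈ cs) (x y : α) : PAdj p.2 x y → PAdj (PTree.node cs) x y
  | new (cs : List (CQGraph × PTree α)) (p : CQGraph × PTree α)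
      (hp : p ∈ cs) (x y : α) (mx my : ℕ) :
      LabIs p.2 x mx → LabIs p.2 y my → p.1.adj mx my →
      PAdj (PTree.node cs) x y

/-- Well-formedness of a parse tree: the vertex sets of the children of a
`⊕` node are pairwise disjoint, and the vertices of each stored colored
quotient graph are exactly the labels occurring in the corresponding
subtree. -/
inductive WF {α : Type} : PTree α → Prop where
  | leaf (v : α) (l : ℕ) : WF (PTree.leaf v l)
  | node (cs : List (CQGraph × PTree α))
      (hwf : ∀ p ∈ cs, WF p.2)
      (hverts : ∀ p ∈ cs, ∀ m, (∃ x, LabIs p.2 x m) ↔ m ∈ p.1.verts)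
      (hdisj : cs.Pairwise fun p q => ∀ x, ¬(VMem x p.2 ∧ VMem x q.2)) :
      WF (PTree.node cs)

section Aux

lemma getmem {X : Type*} (l : List X) (i : Fin l.length) : l.get i ∈ l :=
  List.get_mem l i

lemma vmem_of_labIs {α} {T : PTree α} {x : α} {m : ℕ} (h : LabIs T x m) : VMem x T := by
  induction h with
  | leaf v l => exact VMem.leaf l
  | node cs p hp x m _ ih => exact VMem.node cs p hp ih

lemma labIs_exists {α} {T : PTree α} {x : α} (h : VMem x T) : ∃ m, LabIs T x m := by
  induction h with
  | leaf l => exact ⟨l, LabIs.leaf x l⟩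
  | node cs p hp _ ih =>
    obtain ⟨m, hm⟩ := ih
    exact ⟨p.1.color m, LabIs.node cs p hp x m hm⟩

lemma vmem_node {α} {x : α} {cs : List (CQGraph × PTree α)}
    (h : VMem x (PTree.node cs)) : ∃ i : Fin cs.length, VMem x (cs.get i).2 := by
  cases h with
  | node cs p hp h =>
    obtain ⟨i, hi⟩ := List.mem_iff_get.mp hp
    exact ⟨i, hi ▸ h⟩

lemma labIs_leaf {α} {y v : α} {l m : ℕ} (h : LabIs (PTree.leaf v l) y m) :
    y = v ∧ m = l := by
  cases h; exact ⟨rfl, rfl⟩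

lemma vmem_leaf {α} {x v : α} {l : ℕ} (h : VMem x (PTree.leaf v l)) : x = v := by
  cases h; rfl

lemma index_unique {α} {cs : List (CQGraph × PTree α)}
    (hdisj : cs.Pairwise fun p q => ∀ x, ¬(VMem x p.2 ∧ VMem x q.2))
    {x : α} {i j : Fin cs.length}
    (hi : VMem x (cs.get i).2) (hj : VMem x (cs.get j).2) : i = j := by
  by_contra hne
  rcases (Ne.lt_or_gt hne) with h | h
  · exact (List.pairwise_iff_get.mp hdisj i j h) x ⟨hi, hj⟩
  · exact (List.pairwise_iff_get.mp hdisj j i h) x ⟨hj, hi⟩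

lemma labIs_unique {α} {T : PTree α} (hwf : WF T) :
    ∀ {x m m'}, LabIs T x m → LabIs T x m' → m = m' := by
  induction hwf with
  | leaf v l => intro x m m' h h'; cases h; cases h'; rfl
  | node cs hwf hverts hdisj ih =>
    intro x m m' h h'
    cases h with
    | node _ p hp _ m0 hm0 =>
      cases h' with
      | node _ q hq _ m1 hm1 =>
        obtain ⟨i, hi⟩ := List.mem_iff_get.mp hp
        obtain ⟨j, hj⟩ := List.mem_iff_get.mp hq
        have hij : i = j :=
          index_unique hdisj (hi ▸ vmem_of_labIs hm0) (hj ▸ vmem_of_labIs hm1)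
        have hpq : p = q := by rw [← hi, ← hj, hij]
        subst hpq
        rw [ih p hp hm0 hm1]

lemma vmem_of_padj {α} {T : PTree α} {x y : α} (h : PAdj T x y) :
    VMem x T ∧ VMem y T := by
  induction h with
  | inherit cs p hp x y h ih => exact ⟨VMem.node cs p hp ih.1, VMem.node cs p hp ih.2⟩
  | new cs p hp x y mx my hx hy _ =>
    exact ⟨VMem.node cs p hp (vmem_of_labIs hx), VMem.node cs p hp (vmem_of_labIs hy)⟩

theorem siso_key : ∀ {α β : Type} (T : PTree α) (π : ℕ ≃ ℕ) (T' : PTree β),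
    SIso T π T' → WF T → WF T' →
    ∃ f : {x // VMem x T} → {y // VMem y T'},
      Function.Bijective f ∧
      (∀ x y : {x // VMem x T}, PAdj T x.1 y.1 ↔ PAdj T' (f x).1 (f y).1) ∧
      (∀ (x : {x // VMem x T}) (m : ℕ), LabIs T x.1 m → LabIs T' (f x).1 (π m)) := by
  intro α β T π T' h
  induction h with
  | leaf v w l π =>
    intro _ _
    refine ⟨fun _ => ⟨w, VMem.leaf (π l)⟩, ⟨?_, ?_⟩, ?_, ?_⟩
    · intro a b _
      exact Subtype.ext ((vmem_leaf a.2).trans (vmem_leaf b.2).symm)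
    · intro b
      exact ⟨⟨v, VMem.leaf l⟩, Subtype.ext (vmem_leaf b.2).symm⟩
    · intro a b
      exact iff_of_false (fun h => by cases h) (fun h => by cases h)
    · intro x m hm
      obtain ⟨-, hm'⟩ := labIs_leaf hm
      rw [hm']
      exact LabIs.leaf w (π l)
  | node π cs ds γ es h1 h2 h3 ih =>
    intro hWG hWH
    cases hWG with
    | node _ hwf hverts hdisj =>
    cases hWH with
    | node _ hwf' hverts' hdisj' =>
    choose f hbij hadj hlab using fun i : Fin cs.length =>
      ih i (hwf _ (getmem cs i)) (hwf' _ (getmem ds (γ i)))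
    have hex : ∀ x : {x // VMem x (PTree.node cs)},
        ∃ i : Fin cs.length, VMem x.1 (cs.get i).2 := fun x => vmem_node x.2
    let idx : {x // VMem x (PTree.node cs)} → Fin cs.length := fun x => (hex x).choose
    have hidx : ∀ x, VMem x.1 (cs.get (idx x)).2 := fun x => (hex x).choose_spec
    have idx_eq : ∀ x i, VMem x.1 (cs.get i).2 → idx x = i :=
      fun x i h => index_unique hdisj (hidx x) h
    let F : {x // VMem x (PTree.node cs)} → {y // VMem y (PTree.node ds)} :=
      fun x => ⟨(f (idx x) ⟨x.1, hidx x⟩).1,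
        VMem.node ds _ (getmem ds (γ (idx x))) (f (idx x) ⟨x.1, hidx x⟩).2⟩
    have Fval : ∀ x (i : Fin cs.length) (hx : VMem x.1 (cs.get i).2),
        (F x).1 = (f i ⟨x.1, hx⟩).1 := by
      intro x i hx
      have h := idx_eq x i hx
      subst h
      rfl
    have Fmem : ∀ x (i : Fin cs.length) (hx : VMem x.1 (cs.get i).2),
        VMem (F x).1 (ds.get (γ i)).2 := by
      intro x i hx
      rw [Fval x i hx]
      exact (f i ⟨x.1, hx⟩).2
    refine ⟨F, ⟨?_, ?_⟩, ?_, ?_⟩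
    · -- injective
      intro a b hab
      have hza := Fmem a (idx a) (hidx a)
      have hzb := Fmem b (idx b) (hidx b)
      rw [hab] at hza
      have hij : idx a = idx b := γ.injective (index_unique hdisj' hza hzb)
      have ha' : VMem a.1 (cs.get (idx b)).2 := hij ▸ hidx a
      have h1' := Fval a (idx b) ha'
      have h2' := Fval b (idx b) (hidx b)
      have heq : f (idx b) ⟨a.1, ha'⟩ = f (idx b) ⟨b.1, hidx b⟩ :=
        Subtype.ext (by rw [← h1', ← h2', hab])
      have h3' := congrArg Subtype.val ((hbij (idx b)).1 heq)
      exact Subtype.ext h3'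
    · -- surjective
      intro y
      obtain ⟨k, hk⟩ := vmem_node y.2
      have hgi : γ (γ.symm k) = k := γ.apply_symm_apply k
      have hk' : VMem y.1 (ds.get (γ (γ.symm k))).2 := by rw [hgi]; exact hk
      obtain ⟨x0, hx0⟩ := (hbij (γ.symm k)).2 ⟨y.1, hk'⟩
      refine ⟨⟨x0.1, VMem.node cs _ (getmem cs (γ.symm k)) x0.2⟩, ?_⟩
      apply Subtype.ext
      rw [Fval ⟨x0.1, VMem.node cs _ (getmem cs (γ.symm k)) x0.2⟩ (γ.symm k) x0.2]
      have := congrArg Subtype.val hx0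
      exact this
    · -- adjacency
      intro a b
      constructor
      · intro hab
        cases hab with
        | inherit _ p hp _ _ hsub =>
          obtain ⟨i0, hi0⟩ := List.mem_iff_get.mp hp
          subst hi0
          have hva := (vmem_of_padj hsub).1
          have hvb := (vmem_of_padj hsub).2
          have := (hadj i0 ⟨a.1, hva⟩ ⟨b.1, hvb⟩).mp hsub
          rw [← Fval a i0 hva, ← Fval b i0 hvb] at this
          exact PAdj.inherit ds _ (getmem ds (γ i0)) _ _ this
        | new _ p hp _ _ mx my hlx hly hQ =>
          obtain ⟨i0, hi0⟩ := List.mem_iff_get.mp hp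
          subst hi0
          have hva := vmem_of_labIs hlx
          have hvb := vmem_of_labIs hly
          have hlx' := hlab i0 ⟨a.1, hva⟩ mx hlx
          have hly' := hlab i0 ⟨b.1, hvb⟩ my hly
          rw [← Fval a i0 hva] at hlx'
          rw [← Fval b i0 hvb] at hly'
          have hmx : mx ∈ (cs.get i0).1.verts :=
            (hverts _ (getmem cs i0) mx).mp ⟨a.1, hlx⟩
          have hmy : my ∈ (cs.get i0).1.verts :=
            (hverts _ (getmem cs i0) my).mp ⟨b.1, hly⟩
          have hQ' := ((h1 i0).2 mx my hmx hmy).mp hQ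
          exact PAdj.new ds _ (getmem ds (γ i0)) _ _ _ _ hlx' hly' hQ'
      · intro hab
        cases hab with
        | inherit _ q hq _ _ hsub =>
          obtain ⟨k, hk⟩ := List.mem_iff_get.mp hq
          subst hk
          have hva' := (vmem_of_padj hsub).1
          have hvb' := (vmem_of_padj hsub).2
          have hka : γ (idx a) = k := index_unique hdisj' (Fmem a (idx a) (hidx a)) hva'
          have hkb : γ (idx b) = k := index_unique hdisj' (Fmem b (idx b) (hidx b)) hvb'
          have hib : idx b = idx a := γ.injective (by rw [hka, hkb])
          have hvb : VMem b.1 (cs.get (idx a)).2 := hib ▸ hidx b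
          have hsub' : PAdj (ds.get (γ (idx a))).2 (F a).1 (F b).1 := by
            rw [hka]; exact hsub
          rw [Fval a (idx a) (hidx a), Fval b (idx a) hvb] at hsub'
          have := (hadj (idx a) ⟨a.1, hidx a⟩ ⟨b.1, hvb⟩).mpr hsub'
          exact PAdj.inherit cs _ (getmem cs (idx a)) _ _ this
        | new _ q hq _ _ mx' my' hlx' hly' hQ' =>
          obtain ⟨k, hk⟩ := List.mem_iff_get.mp hq
          subst hk
          have hva' := vmem_of_labIs hlx'
          have hvb' := vmem_of_labIs hly'
          have hka : γ (idx a) = k := index_unique hdisj' (Fmem a (idx a) (hidx a)) hva'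
          have hkb : γ (idx b) = k := index_unique hdisj' (Fmem b (idx b) (hidx b)) hvb'
          have hib : idx b = idx a := γ.injective (by rw [hka, hkb])
          have hvb : VMem b.1 (cs.get (idx a)).2 := hib ▸ hidx b
          obtain ⟨mx, hmx⟩ := labIs_exists (hidx a)
          obtain ⟨my, hmy⟩ := labIs_exists hvb
          have hlxF := hlab (idx a) ⟨a.1, hidx a⟩ mx hmx
          have hlyF := hlab (idx a) ⟨b.1, hvb⟩ my hmy
          rw [← Fval a (idx a) (hidx a)] at hlxF
          rw [← Fval b (idx a) hvb] at hlyF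
          have hlx'' : LabIs (ds.get (γ (idx a))).2 (F a).1 mx' := by rw [hka]; exact hlx'
          have hly'' : LabIs (ds.get (γ (idx a))).2 (F b).1 my' := by rw [hka]; exact hly'
          have hwfd := hwf' _ (getmem ds (γ (idx a)))
          have hex1 : mx' = es (idx a) mx := labIs_unique hwfd hlx'' hlxF
          have hey1 : my' = es (idx a) my := labIs_unique hwfd hly'' hlyF
          have hmxv : mx ∈ (cs.get (idx a)).1.verts :=
            (hverts _ (getmem cs (idx a)) mx).mp ⟨a.1, hmx⟩
          have hmyv : my ∈ (cs.get (idx a)).1.verts :=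
            (hverts _ (getmem cs (idx a)) my).mp ⟨b.1, hmy⟩
          have hQ'' : (ds.get (γ (idx a))).1.adj (es (idx a) mx) (es (idx a) my) := by
            rw [hka]
            rw [hex1, hey1] at hQ'
            exact hQ'
          have := ((h1 (idx a)).2 mx my hmxv hmyv).mpr hQ''
          exact PAdj.new cs _ (getmem cs (idx a)) _ _ mx my hmx hmy this
    · -- labels
      intro x m hm
      cases hm with
      | node _ p hp _ m0 hm0 =>
        obtain ⟨i0, hi0⟩ := List.mem_iff_get.mp hp
        subst hi0
        have hv := vmem_of_labIs hm0
        have hl' := hlab i0 ⟨x.1, hv⟩ m0 hm0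
        rw [← Fval x i0 hv] at hl'
        have hmem : m0 ∈ (cs.get i0).1.verts := (hverts _ (getmem cs i0) m0).mp ⟨x.1, hm0⟩
        have hc := (h2 i0) m0 hmem
        rw [hc]
        exact LabIs.node ds _ (getmem ds (γ i0)) _ _ hl'

end Aux

/-- If two (well-formed) parse trees are structurally isomorphic, then the
graphs generated by them are isomorphic. -/
theorem SIso.graphs_isomorphic {α β : Type}
    (T_G : PTree α) (T_H : PTree β) (π : ℕ ≃ ℕ)
    (hG : WF T_G) (hH : WF T_H) (h : SIso T_G π T_H) :
    ∃ f : {x : α // VMem x T_G} → {y : β // VMem y T_H},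
      Function.Bijective f ∧
      ∀ x y : {x : α // VMem x T_G},
        PAdj T_G x.1 y.1 ↔ PAdj T_H (f x).1 (f y).1 := by
  obtain ⟨f, hbij, hadj, _⟩ := siso_key T_G π T_H h hG hH
  exact ⟨f, hbij, hadj⟩
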